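/- The seller's indifference price is dominated by the superhedging cost: if there exists x ∈ ℝ^J and z ∈ ℝ^m with ⟨p(ω), x⟩ + ⟨ΔX(ω), z⟩ ≥ c(ω) for all ω and Σ_j S^j(x^j) ≤ π, then φ(w̄ + π, c̄ + c) ≤ φ(w̄, c̄), hence π_s(w̄, c̄; c) ≤ π_sup(c), where π_sup(c) is the infimum of such costs π. (Assume no quantity constraints, i.e., D = ℝ^J, and that the feasible set for φ(w̄, c̄) is nonempty.) -/
import Mathlib


open Finset

variable {Ω : Type*} [Fintype Ω] {J m : ℕ}

/-- Optimal value function (no quantity constraints, i.e. `D = ℝ^J`),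
with value `⊤` when the budget constraint set is empty. -/
noncomputable def ssValue (P : Ω → ℝ) (v : ℝ → ℝ) (S : Fin J → ℝ → ℝ)
    (p : Ω → Fin J → ℝ) (ΔX : Ω → Fin m → ℝ) (w : ℝ) (c : Ω → ℝ) : EReal :=
  sInf {y : EReal | ∃ (x : Fin J → ℝ) (z : Fin m → ℝ), (∑ j, S j (x j)) ≤ w ∧
    y = ((∑ ω, P ω * v (c ω - (∑ j, p ω j * x j) - ∑ i, ΔX ω i * z i) : ℝ) : EReal)}

/-- Seller's indifference price (with `inf ∅ = +∞`). -/
noncomputable def piS (P : Ω → ℝ) (v : ℝ → ℝ) (S : Fin J → ℝ → ℝ)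
    (p : Ω → Fin J → ℝ) (ΔX : Ω → Fin m → ℝ) (wbar : ℝ) (cbar c : Ω → ℝ) : EReal :=
  sInf ((fun w : ℝ => (w : EReal)) ''
    {w : ℝ | ssValue P v S p ΔX (wbar + w) (fun ω => cbar ω + c ω)
              ≤ ssValue P v S p ΔX wbar cbar})

/-- Superhedging cost (with `inf ∅ = +∞`). -/
noncomputable def piSup (S : Fin J → ℝ → ℝ) (p : Ω → Fin J → ℝ)
    (ΔX : Ω → Fin m → ℝ) (c : Ω → ℝ) : EReal :=
  sInf {y : EReal | ∃ (x : Fin J → ℝ) (z : Fin m → ℝ),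
    (∀ ω, c ω ≤ (∑ j, p ω j * x j) + ∑ i, ΔX ω i * z i) ∧
    y = ((∑ j, S j (x j) : ℝ) : EReal)}

/-- The seller's indifference price is dominated by the superhedging cost. -/
theorem sellerPrice_le_superhedging (P : Ω → ℝ) (hP : ∀ ω, 0 ≤ P ω)
    (hP1 : ∑ ω, P ω = 1) (v : ℝ → ℝ) (hv : Monotone v)
    (S : Fin J → ℝ → ℝ) (hSsub : ∀ j a b, S j (a + b) ≤ S j a + S j b)
    (hSconv : ∀ j, ConvexOn ℝ Set.univ (S j))
    (p : Ω → Fin J → ℝ) (ΔX : Ω → Fin m → ℝ) (wbar : ℝ) (cbar : Ω → ℝ)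
    (hfeas : ∃ (x : Fin J → ℝ), (∑ j, S j (x j)) ≤ wbar) (c : Ω → ℝ) :
    (∀ (pi : ℝ) (x : Fin J → ℝ) (z : Fin m → ℝ),
      (∀ ω, c ω ≤ (∑ j, p ω j * x j) + ∑ i, ΔX ω i * z i) →
      (∑ j, S j (x j)) ≤ pi →
      ssValue P v S p ΔX (wbar + pi) (fun ω => cbar ω + c ω)
        ≤ ssValue P v S p ΔX wbar cbar) ∧
    piS P v S p ΔX wbar cbar c ≤ piSup S p ΔX c := by
  have main : ∀ (pi : ℝ) (x : Fin J → ℝ) (z : Fin m → ℝ),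
      (∀ ω, c ω ≤ (∑ j, p ω j * x j) + ∑ i, ΔX ω i * z i) →
      (∑ j, S j (x j)) ≤ pi →
      ssValue P v S p ΔX (wbar + pi) (fun ω => cbar ω + c ω)
        ≤ ssValue P v S p ΔX wbar cbar := by
    intro pi x z hsh hcost
    apply le_sInf
    rintro y ⟨x', z', hx', rfl⟩
    have hbudget : (∑ j, S j ((fun j => x' j + x j) j)) ≤ wbar + pi := by
      calc ∑ j, S j (x' j + x j) ≤ ∑ j, (S j (x' j) + S j (x j)) :=
            Finset.sum_le_sum fun j _ => hSsub j _ _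
        _ = (∑ j, S j (x' j)) + ∑ j, S j (x j) := Finset.sum_add_distrib
        _ ≤ wbar + pi := add_le_add hx' hcost
    refine le_trans (sInf_le ⟨fun j => x' j + x j, fun i => z' i + z i, hbudget, rfl⟩) ?_
    rw [EReal.coe_le_coe_iff]
    apply Finset.sum_le_sum
    intro ω _
    apply mul_le_mul_of_nonneg_left _ (hP ω)
    apply hv
    have h1 : ∑ j, p ω j * (x' j + x j) = (∑ j, p ω j * x' j) + ∑ j, p ω j * x j := by
      rw [← Finset.sum_add_distrib]; apply Finset.sum_congr rfl; intros; ring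
    have h2 : ∑ i, ΔX ω i * (z' i + z i) = (∑ i, ΔX ω i * z' i) + ∑ i, ΔX ω i * z i := by
      rw [← Finset.sum_add_distrib]; apply Finset.sum_congr rfl; intros; ring
    have := hsh ω
    simp only []
    linarith
  refine ⟨main, ?_⟩
  apply le_sInf
  rintro y ⟨x, z, hsh, rfl⟩
  exact sInf_le ⟨∑ j, S j (x j), main _ x z hsh le_rfl, rfl⟩
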